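/- Let R be a finite, reduced, crystallographic root system spanning a finite-dimensional real inner product space V, with base S and positive roots R⁺, and let S_P ⊆ S with R_P⁺ the set of positive roots that are nonnegative integer combinations of elements of S_P. Then Σ_{β ∈ S∖S_P} (n_β − 1) ≤ #(R⁺∖R_P⁺), where n_β = 2 − ⟨Σ_{α ∈ R_P⁺} α, β^∨⟩. -/

import Mathlib

open scoped RealInnerProductSpace

/-- A finite, reduced, crystallographic root system `R` spanning a
finite-dimensional real inner product space `V`, together with a base `S`
(the simple roots), the corresponding set `Rpos` of positive roots,
the integer coefficients `coeff α γ` of a root `α` in the base `S`,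
the integer coefficients `ccoeff α γ` of the coroot `α^∨ = (2/(α,α))•α` of a
positive root in the simple coroots, and the integer Cartan pairings
`cartan α β = ⟨α, β^∨⟩ = 2(α,β)/(β,β)`. -/
structure RootSystemWithBase (V : Type*) [NormedAddCommGroup V]
    [InnerProductSpace ℝ V] [FiniteDimensional ℝ V] where
  R : Finset V
  S : Finset V
  Rpos : Finset V
  coeff : V → V → ℤ
  ccoeff : V → V → ℤ
  cartan : V → V → ℤ
  root_ne_zero : ∀ α ∈ R, α ≠ (0 : V)
  span_top : Submodule.span ℝ (R : Set V) = ⊤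
  neg_mem : ∀ α ∈ R, -α ∈ R
  reduced : ∀ α ∈ R, ∀ c : ℝ, c • α ∈ (R : Set V) → c = 1 ∨ c = -1
  cartan_eq : ∀ α ∈ R, ∀ β ∈ R, (cartan α β : ℝ) = 2 * ⟪α, β⟫ / ⟪β, β⟫
  reflect_mem : ∀ α ∈ R, ∀ β ∈ R, β - cartan β α • α ∈ R
  S_subset : ∀ γ ∈ S, γ ∈ Rpos
  Rpos_subset : ∀ α ∈ Rpos, α ∈ R
  S_indep : LinearIndependent ℝ (Subtype.val : {x // x ∈ S} → V)
  root_eq_sum : ∀ α ∈ R, α = ∑ γ ∈ S, coeff α γ • γ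
  mem_Rpos_iff : ∀ α ∈ R, (α ∈ Rpos ↔ ∀ γ ∈ S, 0 ≤ coeff α γ)
  pos_or_neg : ∀ α ∈ R, α ∈ Rpos ∨ -α ∈ Rpos
  coroot_eq_sum : ∀ α ∈ Rpos,
    (2 / ⟪α, α⟫) • α = ∑ γ ∈ S, ccoeff α γ • ((2 / ⟪γ, γ⟫) • γ)
  ccoeff_nonneg : ∀ α ∈ Rpos, ∀ γ ∈ S, 0 ≤ ccoeff α γ

namespace RootSystemWithBase

variable {V : Type*} [NormedAddCommGroup V] [InnerProductSpace ℝ V]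
  [FiniteDimensional ℝ V] (D : RootSystemWithBase V)

/-- The coroot `α^∨ = 2α/(α,α)` of a root `α`. -/
noncomputable def coroot (_D : RootSystemWithBase V) (α : V) : V := (2 / ⟪α, α⟫) • α

/-- The height of the coroot of a positive root: the sum of its coefficients
in the basis of simple coroots. -/
def ht (α : V) : ℤ := ∑ γ ∈ D.S, D.ccoeff α γ

open Classical in
/-- `R_P⁺`: the positive roots that are nonnegative integer combinations of
the elements of `SP`. -/
noncomputable def RP (SP : Finset V) : Finset V :=
  D.Rpos.filter fun α => ∃ c : V → ℤ, (∀ γ, 0 ≤ c γ) ∧ α = ∑ γ ∈ SP, c γ • γ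

/-- `n_β := 2 - ⟨Σ_{α ∈ R_P⁺} α, β^∨⟩`. -/
noncomputable def n (SP : Finset V) (β : V) : ℤ := 2 - ∑ α ∈ D.RP SP, D.cartan α β

/-- The reflection `s_α` in a root `α`, as a map `V → V`. -/
noncomputable def refl (_D : RootSystemWithBase V) (α : V) (x : V) : V := x - (2 * ⟪x, α⟫ / ⟪α, α⟫) • α

/-- `w : V → V` can be written as a composition of `t` simple reflections. -/
noncomputable def IsWord (w : V → V) (t : ℕ) : Prop :=
  ∃ b : Fin t → V, (∀ i, b i ∈ D.S) ∧
    w = (List.ofFn fun i => D.refl (b i)).foldr (· ∘ ·) id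

/-- Membership in the Weyl group `W` (as a group of maps `V → V`): `w` is a
composition of simple reflections. -/
noncomputable def MemW (w : V → V) : Prop := ∃ t, D.IsWord w t

/-- The length of an element of the Weyl group: the smallest number of simple
reflections needed to express it. -/
noncomputable def len (w : V → V) : ℕ := sInf {t | D.IsWord w t}

/-- The inversion set `I(w) = {α ∈ R⁺ : w(α) ∈ -R⁺}`. -/
def inversions (w : V → V) : Set V := {α | α ∈ D.Rpos ∧ -(w α) ∈ D.Rpos}

/-- `W^j = {w ∈ W : I(w) ⊆ R⁺ ∖ R_j}`, the minimal length representatives of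
`W/W_j`, where `R_j` is the set of roots lying in the span of `S ∖ {β}`. -/
noncomputable def Wj (β : V) : Set (V → V) :=
  {w | D.MemW w ∧
    ∀ α ∈ D.inversions w, α ∉ Submodule.span ℝ ((D.S : Set V) \ {β})}

end RootSystemWithBase

section Aux

variable {V : Type*} [NormedAddCommGroup V] [InnerProductSpace ℝ V]
  [FiniteDimensional ℝ V] (D : RootSystemWithBase V)

lemma aux_inner_self_pos {x : V} (hx : x ≠ 0) : (0:ℝ) < ⟪x, x⟫ := by
  rcases lt_or_eq_of_le (real_inner_self_nonneg (x := x)) with h | h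
  · exact h
  · exact absurd (real_inner_self_nonpos.mp h.symm.le) hx

lemma aux_rep_unique (a b : V → ℝ)
    (h : (∑ γ ∈ D.S, a γ • γ) = ∑ γ ∈ D.S, b γ • γ) :
    ∀ γ ∈ D.S, a γ = b γ := by
  intro γ hγ
  have hind := linearIndependent_iff'.mp D.S_indep
  have hz : ∑ i ∈ Finset.univ, ((fun i : {x // x ∈ D.S} => a i.val - b i.val) i) • (i : V) = 0 := by
    have : ∑ i : {x // x ∈ D.S}, (a i.val - b i.val) • (i : V)
        = ∑ γ ∈ D.S, (a γ - b γ) • γ := Finset.sum_coe_sort D.S (fun γ => (a γ - b γ) • γ)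
    rw [this]
    simp only [sub_smul, Finset.sum_sub_distrib, h, sub_self]
  have := hind Finset.univ _ hz ⟨γ, hγ⟩ (Finset.mem_univ _)
  simpa [sub_eq_zero] using this

/-- If two roots have negative inner product and don't sum to zero, their sum is a root. -/
lemma aux_add_root {x β : V} (hx : x ∈ D.R) (hβ : β ∈ D.R) (hne : x + β ≠ 0)
    (hneg : ⟪x, β⟫ < 0) : x + β ∈ D.R := by
  have hx0 : x ≠ 0 := D.root_ne_zero x hx
  have hβ0 : β ≠ 0 := D.root_ne_zero β hβ
  have hxx : (0:ℝ) < ⟪x, x⟫ := aux_inner_self_pos hx0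
  have hββ : (0:ℝ) < ⟪β, β⟫ := aux_inner_self_pos hβ0
  -- not parallel
  have hpar : ∀ r : ℝ, x ≠ r • β := by
    intro r hr
    have : r • β ∈ (D.R : Set V) := by rw [← hr]; exact_mod_cast hx
    rcases D.reduced β hβ r this with h1 | h1
    · rw [hr, h1, one_smul] at hneg
      exact absurd hββ (by linarith)
    · rw [hr, h1] at hne
      simp at hne
  -- strict Cauchy-Schwarz
  have hCS : ⟪x, β⟫ * ⟪x, β⟫ < ⟪x, x⟫ * ⟪β, β⟫ := by
    rcases lt_or_eq_of_le (real_inner_mul_inner_self_le x β) with h | h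
    · exact h
    · exfalso
      set t : ℝ := ⟪β, x⟫ with ht
      have key : t * t = (‖β‖*‖x‖) * (‖β‖*‖x‖) := by
        have e1 : t * t = ⟪x, β⟫ * ⟪x, β⟫ := by rw [ht, real_inner_comm]
        rw [e1, h, real_inner_self_eq_norm_mul_norm, real_inner_self_eq_norm_mul_norm]
        ring
      have h1 : |t| * |t| = (‖β‖*‖x‖) * (‖β‖*‖x‖) := by rw [abs_mul_abs_self]; exact key
      have h2 : |t| = ‖β‖*‖x‖ :=
        (mul_self_inj_of_nonneg (abs_nonneg _)
          (mul_nonneg (norm_nonneg _) (norm_nonneg _))).mp h1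
      have hn : ‖t‖ = ‖β‖ * ‖x‖ := by rw [Real.norm_eq_abs]; exact h2
      obtain ⟨r, hr0, hr⟩ := (norm_inner_eq_norm_iff hβ0 hx0).mp hn
      exact hpar r hr
  have hcart1 : (D.cartan x β : ℝ) = 2 * ⟪x, β⟫ / ⟪β, β⟫ := D.cartan_eq x hx β hβ
  have hcart2 : (D.cartan β x : ℝ) = 2 * ⟪β, x⟫ / ⟪x, x⟫ := D.cartan_eq β hβ x hx
  have hc1neg : D.cartan x β < 0 := by
    have : (D.cartan x β : ℝ) < 0 := by
      rw [hcart1]; exact div_neg_of_neg_of_pos (by linarith) hββ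
    exact_mod_cast this
  have hc2neg : D.cartan β x < 0 := by
    have : (D.cartan β x : ℝ) < 0 := by
      rw [hcart2, real_inner_comm]; exact div_neg_of_neg_of_pos (by linarith) hxx
    exact_mod_cast this
  have hprod : D.cartan x β * D.cartan β x < 4 := by
    have : (D.cartan x β : ℝ) * (D.cartan β x : ℝ) < 4 := by
      rw [hcart1, hcart2, div_mul_div_comm, div_lt_iff₀ (by positivity)]
      nlinarith [hCS, real_inner_comm β x, hxx, hββ]
    exact_mod_cast this
  have hone : D.cartan x β = -1 ∨ D.cartan β x = -1 := by
    by_contra hcon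
    push_neg at hcon
    have h1 : D.cartan x β ≤ -2 := by omega
    have h2 : D.cartan β x ≤ -2 := by omega
    nlinarith
  rcases hone with h | h
  · have := D.reflect_mem β hβ x hx
    rw [h] at this
    simpa using this
  · have := D.reflect_mem x hx β hβ
    rw [h] at this
    have h2 : β - (-1 : ℤ) • x = x + β := by simp; abel
    rw [h2] at this
    exact this

/-- Unbroken root strings: `α + k•β` is a root for `0 ≤ k ≤ -⟨α,β^∨⟩`. -/
lemma aux_string {α β : V} (hα : α ∈ D.R) (hβ : β ∈ D.R)
    (hindep : ∀ c : ℝ, α ≠ c • β) :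
    ∀ k : ℤ, 0 ≤ k → k ≤ -D.cartan α β → α + k • β ∈ D.R := by
  classical
  have hβ0 : β ≠ 0 := D.root_ne_zero β hβ
  have hββ : (0:ℝ) < ⟪β, β⟫ := aux_inner_self_pos hβ0
  set m : ℤ := -D.cartan α β with hm
  have hPm : α + m • β ∈ D.R := by
    have := D.reflect_mem β hβ α hα
    have he : α - D.cartan α β • β = α + m • β := by
      rw [hm, sub_eq_add_neg, ← neg_smul]
    rwa [he] at this
  have hP0 : α + (0:ℤ) • β ∈ D.R := by simpa using hα
  -- nonzero along the string
  have hnz : ∀ j : ℤ, α + j • β ≠ 0 := by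
    intro j hj
    apply hindep (-(j:ℝ))
    have : α = -(j • β) := by linear_combination (norm := abel) hj
    rw [this, ← neg_smul, ← Int.cast_smul_eq_zsmul ℝ]
    push_cast
    ring_nf
  intro k hk0 hkm
  by_contra hbad
  set B : Finset ℤ := (Finset.Icc 0 m).filter (fun j => α + j • β ∉ D.R) with hB
  have hne : B.Nonempty := ⟨k, by simp [hB, Finset.mem_Icc, hk0, hkm, hbad]⟩
  set j1 := B.min' hne with hj1
  set j2 := B.max' hne with hj2
  have hj1B : j1 ∈ B := B.min'_mem hne
  have hj2B : j2 ∈ B := B.max'_mem hne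
  obtain ⟨hj1I, hj1R⟩ : j1 ∈ Finset.Icc 0 m ∧ α + j1 • β ∉ D.R := by
    simpa [hB] using hj1B
  obtain ⟨hj2I, hj2R⟩ : j2 ∈ Finset.Icc 0 m ∧ α + j2 • β ∉ D.R := by
    simpa [hB] using hj2B
  rw [Finset.mem_Icc] at hj1I hj2I
  have hj1pos : 1 ≤ j1 := by
    rcases lt_or_ge 0 j1 with h | h
    · omega
    · exfalso; apply hj1R
      have : j1 = 0 := le_antisymm h hj1I.1
      rw [this]; exact hP0
  have hj2lt : j2 < m := by
    rcases lt_or_ge j2 m with h | h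
    · exact h
    · exfalso; apply hj2R
      have : j2 = m := le_antisymm hj2I.2 h
      rw [this]; exact hPm
  have hj12 : j1 ≤ j2 := B.min'_le j2 hj2B
  -- α + (j1-1)•β is a root
  have hlow : α + (j1 - 1) • β ∈ D.R := by
    by_contra hcon
    have : j1 - 1 ∈ B := by
      simp only [hB, Finset.mem_filter, Finset.mem_Icc]
      exact ⟨⟨by omega, by omega⟩, hcon⟩
    have := B.min'_le _ this
    omega
  -- α + (j2+1)•β is a root
  have hhigh : α + (j2 + 1) • β ∈ D.R := by
    by_contra hcon
    have : j2 + 1 ∈ B := by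
      simp only [hB, Finset.mem_filter, Finset.mem_Icc]
      exact ⟨⟨by omega, by omega⟩, hcon⟩
    have := B.le_max' _ this
    omega
  -- inner product bounds
  have h1 : (0:ℝ) ≤ ⟪α + (j1 - 1) • β, β⟫ := by
    by_contra hcon
    push_neg at hcon
    have := aux_add_root D hlow hβ (by
      have he : α + (j1 - 1) • β + β = α + j1 • β := by
        rw [sub_smul, one_smul]; abel
      rw [he]; exact hnz j1) hcon
    have he : α + (j1 - 1) • β + β = α + j1 • β := by
      rw [sub_smul, one_smul]; abel
    rw [he] at this
    exact hj1R this
  have h2 : ⟪α + (j2 + 1) • β, β⟫ ≤ (0:ℝ) := by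
    by_contra hcon
    push_neg at hcon
    have hcon' : ⟪α + (j2 + 1) • β, -β⟫ < 0 := by
      rw [inner_neg_right]; linarith
    have hnegβ : -β ∈ D.R := D.neg_mem β hβ
    have hsum : α + (j2 + 1) • β + -β = α + j2 • β := by
      rw [add_smul, one_smul]; abel
    have := aux_add_root D hhigh hnegβ (by rw [hsum]; exact hnz j2) hcon'
    rw [hsum] at this
    exact hj2R this
  -- expand and contradict
  have e1 : ⟪α + (j1 - 1) • β, β⟫ = ⟪α, β⟫ + ((j1:ℝ) - 1) * ⟪β, β⟫ := by
    rw [inner_add_left, ← Int.cast_smul_eq_zsmul ℝ, real_inner_smul_left]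
    push_cast
    ring
  have e2 : ⟪α + (j2 + 1) • β, β⟫ = ⟪α, β⟫ + ((j2:ℝ) + 1) * ⟪β, β⟫ := by
    rw [inner_add_left, ← Int.cast_smul_eq_zsmul ℝ, real_inner_smul_left]
    push_cast
    ring
  rw [e1] at h1
  rw [e2] at h2
  have : (j1:ℝ) ≤ (j2:ℝ) := by exact_mod_cast hj12
  nlinarith

lemma aux_root_rep {δ : V} (hδ : δ ∈ D.R) :
    ∑ d ∈ D.S, ((D.coeff δ d : ℝ)) • d = δ := by
  nth_rewrite 2 [D.root_eq_sum δ hδ]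
  exact Finset.sum_congr rfl (fun d _ => Int.cast_smul_eq_zsmul ℝ _ _)

lemma aux_rep_eval [DecidableEq V] {SP : Finset V} (hSP : SP ⊆ D.S) {β : V}
    (hβ : β ∈ D.S) (hβSP : β ∉ SP) (u : V → ℝ) (r : ℝ) (e : V → ℝ)
    (h : (∑ d ∈ SP, u d • d) + r • β = ∑ d ∈ D.S, e d • d) :
    e β = r ∧ (∀ d ∈ SP, e d = u d) ∧ (∀ d ∈ D.S, d ∉ SP → d ≠ β → e d = 0) := by
  set U : V → ℝ := fun d => (if d ∈ SP then u d else 0) + (if d = β then r else 0) with hU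
  have hsum : ∑ d ∈ D.S, U d • d = (∑ d ∈ SP, u d • d) + r • β := by
    have h1 : ∑ d ∈ D.S, U d • d
        = (∑ d ∈ D.S, (if d ∈ SP then u d else 0) • d)
          + ∑ d ∈ D.S, (if d = β then r else 0) • d := by
      simp only [hU, add_smul, Finset.sum_add_distrib]
    have h2 : ∑ d ∈ D.S, (if d ∈ SP then u d else 0) • d = ∑ d ∈ SP, u d • d := by
      rw [← Finset.sum_subset hSP (fun d _ hd => by rw [if_neg hd, zero_smul])]
      exact Finset.sum_congr rfl (fun d hd => by rw [if_pos hd])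
    have h3 : ∑ d ∈ D.S, (if d = β then r else 0) • d = r • β := by
      have hcg : ∀ d ∈ D.S, (if d = β then r else 0) • d = if d = β then r • d else 0 :=
        fun d _ => by split_ifs <;> simp
      rw [Finset.sum_congr rfl hcg, Finset.sum_ite_eq' D.S β (fun d => r • d), if_pos hβ]
    rw [h1, h2, h3]
  have hall := aux_rep_unique D U e (by rw [hsum, h])
  refine ⟨?_, ?_, ?_⟩
  · have := (hall β hβ).symm
    simpa [hU, hβSP] using this
  · intro d hd
    have hdβ : d ≠ β := fun hh => hβSP (hh ▸ hd)
    have := (hall d (hSP hd)).symm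
    simpa [hU, hd, hdβ] using this
  · intro d hd hd1 hd2
    have := (hall d hd).symm
    simpa [hU, hd1, hd2] using this

lemma aux_coeff_of_rep [DecidableEq V] {SP : Finset V} (hSP : SP ⊆ D.S) {β : V}
    (hβ : β ∈ D.S) (hβSP : β ∉ SP) {γ : V} (hγ : γ ∈ D.R) (c : V → ℤ) (k : ℤ)
    (h : γ = (∑ d ∈ SP, c d • d) + k • β) :
    D.coeff γ β = k ∧ (∀ d ∈ SP, D.coeff γ d = c d) ∧
      (∀ d ∈ D.S, d ∉ SP → d ≠ β → D.coeff γ d = 0) := by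
  have hrep := aux_root_rep D hγ
  have hL : (∑ d ∈ SP, ((c d : ℝ)) • d) + (k:ℝ) • β
      = ∑ d ∈ D.S, ((D.coeff γ d : ℝ)) • d := by
    rw [hrep, h]
    congr 1
    · exact Finset.sum_congr rfl fun d _ => Int.cast_smul_eq_zsmul ℝ _ _
    · exact Int.cast_smul_eq_zsmul ℝ _ _
  obtain ⟨h1, h2, h3⟩ := aux_rep_eval D hSP hβ hβSP _ _ _ hL
  exact ⟨by exact_mod_cast h1, fun d hd => by exact_mod_cast h2 d hd,
    fun d hd hh1 hh2 => by exact_mod_cast h3 d hd hh1 hh2⟩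

lemma aux_diff_not_pos [DecidableEq V] {γ β : V} (hγ : γ ∈ D.S) (hβ : β ∈ D.S)
    (hne : γ ≠ β) : β - γ ∉ D.Rpos := by
  intro hmem
  have hδR : β - γ ∈ D.R := D.Rpos_subset _ hmem
  have hrep : β - γ = (∑ d ∈ ({γ} : Finset V), (-1 : ℤ) • d) + (1:ℤ) • β := by
    simp
    abel
  obtain ⟨-, h2, -⟩ := aux_coeff_of_rep D (Finset.singleton_subset_iff.mpr hγ) hβ
    (by simpa using hne.symm) hδR (fun _ => (-1 : ℤ)) 1 hrep
  have hc := h2 γ (Finset.mem_singleton_self γ)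
  have := (D.mem_Rpos_iff _ hδR).mp hmem γ hγ
  omega

lemma aux_simple_nonpos [DecidableEq V] {γ β : V} (hγ : γ ∈ D.S) (hβ : β ∈ D.S)
    (hne : γ ≠ β) : ⟪γ, β⟫ ≤ 0 := by
  by_contra hcon
  push_neg at hcon
  have hγR : γ ∈ D.R := D.Rpos_subset _ (D.S_subset _ hγ)
  have hβR : β ∈ D.R := D.Rpos_subset _ (D.S_subset _ hβ)
  have hnγ : -γ ∈ D.R := D.neg_mem _ hγR
  have hneg : ⟪-γ, β⟫ < 0 := by rw [inner_neg_left]; linarith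
  have hnz : -γ + β ≠ 0 := by
    intro h
    apply hne
    have : γ = β := by linear_combination (norm := abel) -h
    exact this
  have hroot : -γ + β ∈ D.R := aux_add_root D hnγ hβR hnz hneg
  have hroot' : β - γ ∈ D.R := by rwa [← sub_eq_neg_add] at hroot
  rcases D.pos_or_neg _ hroot' with h | h
  · exact aux_diff_not_pos D hγ hβ hne h
  · rw [neg_sub] at h
    exact aux_diff_not_pos D hβ hγ hne.symm h

end Aux

/-- `Σ_{β ∈ S∖S_P} (n_β − 1) ≤ #(R⁺ ∖ R_P⁺)`, where
`n_β = 2 − ⟨Σ_{α ∈ R_P⁺} α, β^∨⟩`.  (Strengthened Mukai inequality for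
generalized flag varieties.) -/


theorem strong_mukai_inequality {V : Type*} [NormedAddCommGroup V]
    [InnerProductSpace ℝ V] [FiniteDimensional ℝ V] [DecidableEq V]
    (D : RootSystemWithBase V) (SP : Finset V) (hSP : SP ⊆ D.S) :
    (∑ β ∈ D.S \ SP, (D.n SP β - 1)) ≤ ((D.Rpos \ D.RP SP).card : ℤ) := by
  classical
  set Q := D.S \ SP with hQ
  set M := D.Rpos \ D.RP SP with hM
  set T : V → Finset V := fun β => M.filter
    (fun γ => 0 < D.coeff γ β ∧ ∀ β' ∈ Q, β' ≠ β → D.coeff γ β' = 0) with hT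
  have hRPsub : ∀ α ∈ D.RP SP, α ∈ D.Rpos := by
    intro α hα
    simp only [RootSystemWithBase.RP, Finset.mem_filter] at hα
    exact hα.1
  have hRPrep : ∀ α ∈ D.RP SP, ∃ c : V → ℤ, (∀ d, 0 ≤ c d) ∧ α = ∑ d ∈ SP, c d • d := by
    intro α hα
    simp only [RootSystemWithBase.RP, Finset.mem_filter] at hα
    exact hα.2
  have hRPmem : ∀ α, α ∈ D.Rpos → (∃ c : V → ℤ, (∀ d, 0 ≤ c d) ∧ α = ∑ d ∈ SP, c d • d) →
      α ∈ D.RP SP := by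
    intro α h1 h2
    simp only [RootSystemWithBase.RP, Finset.mem_filter]
    exact ⟨h1, h2⟩
  have stepA : ∀ β ∈ Q, D.n SP β - 1 ≤ ((T β).card : ℤ) := by
    intro β hβQ
    obtain ⟨hβS, hβSP⟩ := Finset.mem_sdiff.mp hβQ
    have hβpos : β ∈ D.Rpos := D.S_subset β hβS
    have hβR : β ∈ D.R := D.Rpos_subset _ hβpos
    have hβ0 : β ≠ 0 := D.root_ne_zero β hβR
    have hββ : (0:ℝ) < ⟪β, β⟫ := aux_inner_self_pos hβ0
    -- the Cartan pairings with β are nonpositive on R_P⁺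
    have hcart : ∀ α ∈ D.RP SP, D.cartan α β ≤ 0 := by
      intro α hα
      obtain ⟨c, hc0, hrep⟩ := hRPrep α hα
      have hαR : α ∈ D.R := D.Rpos_subset _ (hRPsub α hα)
      have hip : ⟪α, β⟫ ≤ 0 := by
        rw [hrep, sum_inner]
        apply Finset.sum_nonpos
        intro d hd
        have h1 : ⟪(c d) • d, β⟫ = (c d : ℝ) * ⟪d, β⟫ := by
          rw [← Int.cast_smul_eq_zsmul ℝ, real_inner_smul_left]
        rw [h1]
        have hd2 : ⟪d, β⟫ ≤ 0 :=
          aux_simple_nonpos D (hSP hd) hβS (fun hh => hβSP (hh ▸ hd))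
        have hd3 : (0:ℝ) ≤ (c d : ℝ) := by exact_mod_cast hc0 d
        exact mul_nonpos_iff.mpr (Or.inl ⟨hd3, hd2⟩)
      have : (D.cartan α β : ℝ) ≤ 0 := by
        rw [D.cartan_eq α hαR β hβR]
        exact div_nonpos_of_nonpos_of_nonneg (by linarith) (le_of_lt hββ)
      exact_mod_cast this
    -- coefficients of β itself
    obtain ⟨hββc, -, hβ0c⟩ := aux_coeff_of_rep D hSP hβS hβSP hβR (fun _ => 0) 1 (by simp)
    have hβRP : β ∉ D.RP SP := by
      intro hmem
      obtain ⟨c, hc0, hrep⟩ := hRPrep β hmem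
      obtain ⟨h0, -, -⟩ := aux_coeff_of_rep D hSP hβS hβSP hβR c 0 (by rw [← hrep]; simp)
      omega
    have hβT : β ∈ T β := by
      rw [hT]
      simp only [Finset.mem_filter]
      refine ⟨?_, by omega, ?_⟩
      · rw [hM]; exact Finset.mem_sdiff.mpr ⟨hβpos, hβRP⟩
      · intro β' hβ' hne
        obtain ⟨hβ'S, hβ'SP⟩ := Finset.mem_sdiff.mp hβ'
        exact hβ0c β' hβ'S hβ'SP hne
    -- the injection domain
    set Dom := (D.RP SP).sigma (fun α => Finset.Icc (1:ℤ) (-D.cartan α β)) with hDom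
    have key : ∀ α ∈ D.RP SP, ∀ k : ℤ, 1 ≤ k → k ≤ -D.cartan α β →
        (α + k • β ∈ (T β).erase β ∧ D.coeff (α + k • β) β = k) := by
      intro α hα k hk1 hk2
      obtain ⟨c, hc0, hrep⟩ := hRPrep α hα
      have hαpos : α ∈ D.Rpos := hRPsub α hα
      have hαR : α ∈ D.R := D.Rpos_subset _ hαpos
      have hα0 : α ≠ 0 := D.root_ne_zero α hαR
      obtain ⟨hαβc, -, -⟩ := aux_coeff_of_rep D hSP hβS hβSP hαR c 0 (by rw [← hrep]; simp)
      have hindep : ∀ r : ℝ, α ≠ r • β := by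
        intro r hr
        have hL : (∑ d ∈ SP, (0:ℝ) • d) + r • β = ∑ d ∈ D.S, ((D.coeff α d : ℝ)) • d := by
          rw [aux_root_rep D hαR, ← hr]; simp
        obtain ⟨h1, -, -⟩ := aux_rep_eval D hSP hβS hβSP _ _ _ hL
        rw [hαβc] at h1
        norm_num at h1
        rw [← h1, zero_smul] at hr
        exact hα0 hr
      have hγR : α + k • β ∈ D.R :=
        aux_string D hαR hβR hindep k (by omega) hk2
      have hγrep : α + k • β = (∑ d ∈ SP, c d • d) + k • β := by rw [← hrep]
      obtain ⟨hγβ, hγSP, hγ0⟩ := aux_coeff_of_rep D hSP hβS hβSP hγR c k hγrep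
      have hγpos : α + k • β ∈ D.Rpos := by
        rw [D.mem_Rpos_iff _ hγR]
        intro d hd
        by_cases h1 : d ∈ SP
        · rw [hγSP d h1]; exact hc0 d
        · by_cases h2 : d = β
          · rw [h2, hγβ]; omega
          · rw [hγ0 d hd h1 h2]
      have hγRP : α + k • β ∉ D.RP SP := by
        intro hmem
        obtain ⟨c', hc'0, hrep'⟩ := hRPrep _ hmem
        obtain ⟨h0, -, -⟩ := aux_coeff_of_rep D hSP hβS hβSP hγR c' 0 (by rw [← hrep']; simp)
        omega
      have hγne : α + k • β ≠ β := by
        intro hh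
        apply hindep ((1:ℝ) - (k:ℝ))
        have h1 : α = β - k • β := by linear_combination (norm := abel) hh
        have h2 : ((1:ℝ) - (k:ℝ)) • β = β - k • β := by
          rw [sub_smul, one_smul, Int.cast_smul_eq_zsmul ℝ]
        rw [h1, ← h2]
      refine ⟨Finset.mem_erase.mpr ⟨hγne, ?_⟩, hγβ⟩
      rw [hT]
      simp only [Finset.mem_filter]
      refine ⟨?_, by omega, ?_⟩
      · rw [hM]; exact Finset.mem_sdiff.mpr ⟨hγpos, hγRP⟩
      · intro β' hβ' hne
        obtain ⟨hβ'S, hβ'SP⟩ := Finset.mem_sdiff.mp hβ'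
        exact hγ0 β' hβ'S hβ'SP hne
    -- cardinality comparison via the injection
    have hcardle : Dom.card ≤ ((T β).erase β).card := by
      apply Finset.card_le_card_of_injOn (fun p => p.1 + p.2 • β)
      · intro p hp
        simp only [hDom, Finset.mem_coe, Finset.mem_sigma] at hp
        obtain ⟨hp1, hp2⟩ := hp
        rw [Finset.mem_Icc] at hp2
        exact (key p.1 hp1 p.2 hp2.1 hp2.2).1
      · intro p hp q hq hpq
        rw [Finset.coe_sigma] at hp hq
        obtain ⟨hp1, hp2⟩ := Set.mem_sigma_iff.mp hp
        obtain ⟨hq1, hq2⟩ := Set.mem_sigma_iff.mp hq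
        rw [Finset.mem_coe, Finset.mem_Icc] at hp2 hq2
        rw [Finset.mem_coe] at hp1 hq1
        have e1 := (key p.1 hp1 p.2 hp2.1 hp2.2).2
        have e2 := (key q.1 hq1 q.2 hq2.1 hq2.2).2
        simp only at hpq
        have hsnd : p.2 = q.2 := by rw [← e1, ← e2, hpq]
        have hfst : p.1 = q.1 := by
          rw [hsnd] at hpq
          exact add_right_cancel hpq
        exact Sigma.ext hfst (heq_of_eq hsnd)
    have hDomcard : (Dom.card : ℤ) = ∑ α ∈ D.RP SP, (-D.cartan α β) := by
      rw [hDom, Finset.card_sigma, Nat.cast_sum]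
      apply Finset.sum_congr rfl
      intro α hα
      rw [Int.card_Icc]
      have h1 := hcart α hα
      rw [Int.toNat_of_nonneg (by omega)]
      ring
    have h6 : (((T β).erase β).card : ℤ) = ((T β).card : ℤ) - 1 := by
      have := Finset.card_erase_add_one hβT
      omega
    have hn1 : D.n SP β - 1 = 1 + ∑ α ∈ D.RP SP, (-D.cartan α β) := by
      simp only [RootSystemWithBase.n, Finset.sum_neg_distrib]
      ring
    have h5 : (Dom.card : ℤ) ≤ (((T β).erase β).card : ℤ) := by exact_mod_cast hcardle
    rw [hn1, ← hDomcard]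
    linarith [h5, h6]
  -- sum over β and disjointness
  have hsum1 : ∑ β ∈ Q, (D.n SP β - 1) ≤ ∑ β ∈ Q, ((T β).card : ℤ) :=
    Finset.sum_le_sum stepA
  have hdisj : ∀ β1 ∈ Q, ∀ β2 ∈ Q, β1 ≠ β2 → Disjoint (T β1) (T β2) := by
    intro β1 hβ1 β2 hβ2 hne
    rw [Finset.disjoint_left]
    intro γ hγ1 hγ2
    rw [hT] at hγ1 hγ2
    simp only [Finset.mem_filter] at hγ1 hγ2
    have h1 := hγ1.2.1
    have h2 := hγ2.2.2 β1 hβ1 hne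
    omega
  have hbu : ∑ β ∈ Q, (T β).card = (Q.biUnion T).card := (Finset.card_biUnion hdisj).symm
  have hsub : Q.biUnion T ⊆ M := by
    intro γ hγ
    rw [Finset.mem_biUnion] at hγ
    obtain ⟨β, hβ, hγT⟩ := hγ
    rw [hT] at hγT
    exact (Finset.mem_filter.mp hγT).1
  have hfin : (Q.biUnion T).card ≤ M.card := Finset.card_le_card hsub
  calc ∑ β ∈ Q, (D.n SP β - 1) ≤ ∑ β ∈ Q, ((T β).card : ℤ) := hsum1
    _ = ((∑ β ∈ Q, (T β).card : ℕ) : ℤ) := by rw [Nat.cast_sum]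
    _ = ((Q.biUnion T).card : ℤ) := by rw [hbu]
    _ ≤ (M.card : ℤ) := by exact_mod_cast hfin
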